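/- Let N = p_i^{m_i} p_j^{m_j} p_k^{m_k} with p_i, p_j, p_k distinct primes and all m_ν ≥ 1, and let S ⊆ ℤ_N satisfy Φ_N | S. (i) If p_i ≠ 2 and there is a grid Λ = Λ(x_0, D(N)) such that N/p_i ∉ Div_N(S ∩ Λ), then S ∩ Λ is N-fibered in the p_j direction or in the p_k direction. (ii) If p_i ≠ 2, p_j ≠ 2, and neither N/p_i nor N/p_j belongs to Div_N(S), then S is N-fibered in the p_k direction. -/

import Mathlib

open Polynomial

/-- The mask polynomial `A(X) = Σ_{a ∈ A} X^a` of a finite subset of `ZMod M`,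
using the representatives in `{0, …, M-1}`. -/
noncomputable def maskPoly (M : ℕ) (A : Finset (ZMod M)) : Polynomial ℤ :=
  ∑ a ∈ A, X ^ a.val

/-- `Φ_s | A` : the `s`-th cyclotomic polynomial divides the mask polynomial of `A` in `ℤ[X]`. -/
def cycDvd (M s : ℕ) (A : Finset (ZMod M)) : Prop :=
  cyclotomic s ℤ ∣ maskPoly M A

/-- `A ⊕ B = ℤ_M` : every element of `ℤ_M` has a unique representation `a + b`
with `a ∈ A` and `b ∈ B`. -/
def IsTiling (M : ℕ) (A B : Set (ZMod M)) : Prop :=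
  ∀ z : ZMod M, ∃! ab : ZMod M × ZMod M, ab.1 ∈ A ∧ ab.2 ∈ B ∧ ab.1 + ab.2 = z

/-- The Coven–Meyerowitz property (T2): whenever `s_1, …, s_m` are prime powers dividing `M`,
powers of pairwise distinct primes, with `Φ_{s_t} | A` for each `t`, then `Φ_{s_1 ⋯ s_m} | A`. -/
def SatisfiesT2 (M : ℕ) (A : Finset (ZMod M)) : Prop :=
  ∀ (P : Finset ℕ) (e : ℕ → ℕ), P.Nonempty →
    (∀ p ∈ P, p.Prime ∧ 1 ≤ e p ∧ p ^ e p ∣ M ∧ cycDvd M (p ^ e p) A) →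
    cycDvd M (∏ p ∈ P, p ^ e p) A

/-- The `D`-grid through `x` in `ZMod M` : `Λ(x, D) = {y : D ∣ y - x}`. -/
def gridSet (M : ℕ) (x : ZMod M) (D : ℕ) : Set (ZMod M) :=
  {y : ZMod M | (D : ZMod M) ∣ (y - x)}

/-- `S` is fibered in the `p` direction on scale `M`: every element of `S` has its whole
fiber `Λ(s, M/p)` contained in `S`. -/
def Fibered (M p : ℕ) (S : Set (ZMod M)) : Prop :=
  ∀ s ∈ S, gridSet M s (M / p) ⊆ S

/-- `Div_N(S)` : the set of values `(s - s', N) = gcd(s - s', N)` for `s, s' ∈ S`. -/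
def DivSet (M N : ℕ) (S : Set (ZMod M)) : Set ℕ :=
  {m : ℕ | ∃ s ∈ S, ∃ s' ∈ S, Nat.gcd (s - s').val N = m}

open Finset

lemma pow_natmod {x : ℂ} {m : ℕ} (hm : x ^ m = 1) (a : ℕ) : x ^ a = x ^ (a % m) := by
  conv_lhs => rw [← Nat.div_add_mod a m]
  rw [pow_add, pow_mul, hm, one_pow, one_mul]

/-- DFT lemma: if `∑ d z γ^z = 0` for all primitive `m`-th roots `γ`, `m` prime,
then `d` is constant. -/
lemma sum_primroots_const {m : ℕ} [NeZero m] (hm : m.Prime) (d : ZMod m → ℂ)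
    (h : ∀ γ : ℂ, IsPrimitiveRoot γ m → ∑ z : ZMod m, d z * γ ^ z.val = 0) :
    ∀ z z' : ZMod m, d z = d z' := by
  have hm0 : m ≠ 0 := hm.pos.ne'
  set ζ : ℂ := Complex.exp (2 * Real.pi * Complex.I / m) with hζdef
  have hζ : IsPrimitiveRoot ζ m := Complex.isPrimitiveRoot_exp m hm0
  have key : ∀ w : ZMod m, (m : ℂ) * d w = ∑ z : ZMod m, d z := by
    intro w
    have hT : ∑ j ∈ range m, (∑ z : ZMod m, d z * ζ ^ (j * z.val)) * ζ ^ (j * (m - w.val)) =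
        ∑ z : ZMod m, d z * ∑ j ∈ range m, (ζ ^ (z.val + (m - w.val))) ^ j := by
      simp only [Finset.sum_mul]
      rw [Finset.sum_comm]
      refine Finset.sum_congr rfl fun z _ => ?_
      rw [Finset.mul_sum]
      refine Finset.sum_congr rfl fun j _ => ?_
      rw [mul_assoc, ← pow_add, ← pow_mul]
      ring_nf
    -- evaluate inner geometric sums
    have hinner : ∀ z : ZMod m, (∑ j ∈ range m, (ζ ^ (z.val + (m - w.val))) ^ j) =
        if z = w then (m : ℂ) else 0 := by
      intro z
      by_cases hzw : z = w
      · subst hzw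
        have hzm : z.val + (m - z.val) = m := by have := ZMod.val_lt z; omega
        rw [hzm, hζ.pow_eq_one]
        simp
      · have hne : ζ ^ (z.val + (m - w.val)) ≠ 1 := by
          intro h1
          have hdvd := (hζ.pow_eq_one_iff_dvd _).1 h1
          have h1' := ZMod.val_lt z
          have h2' := ZMod.val_lt w
          rcases hdvd with ⟨k, hk⟩
          have hk2 : k < 2 := by
            have : m * k < m * 2 := by omega
            exact Nat.lt_of_mul_lt_mul_left this
          have hk0 : k ≠ 0 := by rintro rfl; omega
          have hk1 : k = 1 := by omega
          rw [hk1, mul_one] at hk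
          have : z.val = w.val := by omega
          exact hzw (ZMod.val_injective m this)
        rw [geom_sum_eq hne]
        have hpow : (ζ ^ (z.val + (m - w.val))) ^ m = 1 := by
          rw [← pow_mul, mul_comm, pow_mul, hζ.pow_eq_one, one_pow]
        rw [hpow]
        simp [hzw]
    have hT2 : ∑ j ∈ range m, (∑ z : ZMod m, d z * ζ ^ (j * z.val)) * ζ ^ (j * (m - w.val)) =
        d w * m := by
      rw [hT, Finset.sum_congr rfl fun z _ => by rw [hinner z]]
      simp
    have hT3 : ∑ j ∈ range m, (∑ z : ZMod m, d z * ζ ^ (j * z.val)) * ζ ^ (j * (m - w.val)) =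
        ∑ z : ZMod m, d z := by
      rw [Finset.sum_eq_single 0]
      · simp
      · intro j hj hj0
        have hjm : j < m := Finset.mem_range.1 hj
        have hcop : Nat.Coprime j m :=
          Nat.coprime_comm.mp (hm.coprime_iff_not_dvd.2 (Nat.not_dvd_of_pos_of_lt
            (Nat.pos_of_ne_zero hj0) hjm))
        have hprim : IsPrimitiveRoot (ζ ^ j) m := hζ.pow_of_coprime j hcop
        have h0 := h (ζ ^ j) hprim
        have : (∑ z : ZMod m, d z * ζ ^ (j * z.val)) = 0 := by
          rw [← h0]
          refine Finset.sum_congr rfl fun z _ => ?_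
          rw [← pow_mul, mul_comm]
        rw [this, zero_mul]
      · intro h0; exact absurd (Finset.mem_range.2 hm.pos) h0
    rw [← mul_comm (d w) (m:ℂ), ← hT2, hT3]
  intro z z'
  have : (m:ℂ) * d z = (m:ℂ) * d z' := by rw [key z, key z']
  exact mul_left_cancel₀ (Nat.cast_ne_zero.2 hm0) this


lemma indicator_of_sum_le_one {μ : Type*} [Fintype μ] [DecidableEq μ] (f : μ → ℕ)
    (hle : ∑ i, f i ≤ 1) {i0 : μ} (h1 : 1 ≤ f i0) : f i0 = 1 ∧ ∀ j ≠ i0, f j = 0 := by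
  have hi0 : f i0 ≤ ∑ i, f i := Finset.single_le_sum (fun i _ => Nat.zero_le _) (mem_univ i0)
  constructor
  · omega
  · intro j hj
    have hpair : f i0 + f j = ∑ i ∈ ({i0, j} : Finset μ), f i := by
      rw [Finset.sum_pair (Ne.symm hj)]
    have hsub : ∑ i ∈ ({i0, j} : Finset μ), f i ≤ ∑ i, f i :=
      Finset.sum_le_sum_of_subset (Finset.subset_univ _)
    omega

lemma cols_or_rows {ι κ μ : Type*} [Fintype μ] [DecidableEq μ]
    (M : ι → κ → μ → ℕ)
    (hKR : ∀ y y' z z' i, M y z i + M y' z' i = M y z' i + M y' z i)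
    (hle : ∀ y z, ∑ i, M y z i ≤ 1) :
    (∀ y y' z, M y z = M y' z) ∨ (∀ y z z', M y z = M y z') := by
  by_contra hcon
  push_neg at hcon
  obtain ⟨⟨y1, y2, z0, hcol⟩, ⟨y0, zA, zB, hrow⟩⟩ := hcon
  have hAB : M y1 zA ≠ M y1 zB := by
    intro hEq
    apply hrow
    funext i
    have := hKR y1 y0 zA zB i
    have h2 : M y1 zA i = M y1 zB i := congrFun hEq i
    omega
  have hAC : M y1 zA ≠ M y2 zA := by
    intro hEq
    apply hcol
    funext i
    have := hKR y1 y2 zA z0 i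
    have h2 : M y1 zA i = M y2 zA i := congrFun hEq i
    omega
  have heq : ∀ i, M y1 zA i + M y2 zB i = M y1 zB i + M y2 zA i := fun i => hKR y1 y2 zA zB i
  obtain ⟨i0, hi0⟩ := Function.ne_iff.1 hAB
  rcases Nat.lt_or_ge (M y1 zB i0) (M y1 zA i0) with hlt | hge
  · -- A i0 ≥ 1
    obtain ⟨hA1, hA0⟩ := indicator_of_sum_le_one (M y1 zA) (hle y1 zA) (i0 := i0) (by omega)
    have hB0 : M y1 zB i0 = 0 := by omega
    have hC1 : M y2 zA i0 = 1 := by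
      have := heq i0
      have hCle : M y2 zA i0 ≤ 1 := by
        have := Finset.single_le_sum (f := M y2 zA) (fun i _ => Nat.zero_le _) (mem_univ i0)
        have := hle y2 zA
        omega
      omega
    obtain ⟨hC1', hC0⟩ := indicator_of_sum_le_one (M y2 zA) (hle y2 zA) (i0 := i0) (by omega)
    apply hAC
    funext j
    by_cases hj : j = i0
    · subst hj; omega
    · rw [hA0 j hj, hC0 j hj]
  · have hlt' : M y1 zA i0 < M y1 zB i0 := by omega
    obtain ⟨hB1, hB0⟩ := indicator_of_sum_le_one (M y1 zB) (hle y1 zB) (i0 := i0) (by omega)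
    have hA0 : M y1 zA i0 = 0 := by omega
    have hD1 : M y2 zB i0 = 1 := by
      have := heq i0
      have hDle : M y2 zB i0 ≤ 1 := by
        have := Finset.single_le_sum (f := M y2 zB) (fun i _ => Nat.zero_le _) (mem_univ i0)
        have := hle y2 zB
        omega
      omega
    obtain ⟨hD1', hD0⟩ := indicator_of_sum_le_one (M y2 zB) (hle y2 zB) (i0 := i0) (by omega)
    have hBD : M y1 zB = M y2 zB := by
      funext j
      by_cases hj : j = i0
      · subst hj; omega
      · rw [hB0 j hj, hD0 j hj]
    apply hAC
    funext j
    have := heq j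
    have : M y1 zB j = M y2 zB j := congrFun hBD j
    omega


lemma expand_pow_cyclotomic (p : ℕ) (hp : p.Prime) (k : ℕ) :
    ∀ (n : ℕ), p ∣ n → expand ℤ (p ^ k) (cyclotomic n ℤ) = cyclotomic (n * p ^ k) ℤ := by
  induction k with
  | zero => intro n _; simp
  | succ k ih =>
      intro n hdvd
      have h1 : expand ℤ p (cyclotomic n ℤ) = cyclotomic (n * p) ℤ :=
        cyclotomic_expand_eq_cyclotomic hp hdvd ℤ
      have h2 : expand ℤ (p ^ k) (cyclotomic (n * p) ℤ) = cyclotomic (n * p * p ^ k) ℤ :=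
        ih (n * p) ⟨n, mul_comm n p⟩
      calc expand ℤ (p ^ (k + 1)) (cyclotomic n ℤ)
          = expand ℤ (p ^ k * p) (cyclotomic n ℤ) := by rw [pow_succ]
        _ = expand ℤ (p ^ k) (expand ℤ p (cyclotomic n ℤ)) := (expand_expand (p^k) p _).symm
        _ = cyclotomic (n * p * p ^ k) ℤ := by rw [h1, h2]
        _ = cyclotomic (n * p ^ (k + 1)) ℤ := by ring_nf

lemma cyclotomic_eq_expand_D (p q r a b c : ℕ) (hp : p.Prime) (hq : q.Prime) (hr : r.Prime) :
    cyclotomic (p ^ (a+1) * q ^ (b+1) * r ^ (c+1)) ℤ =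
      expand ℤ (p ^ a * q ^ b * r ^ c) (cyclotomic (p * q * r) ℤ) := by
  have h1 : expand ℤ (p ^ a) (cyclotomic (p * q * r) ℤ) = cyclotomic (p * q * r * p ^ a) ℤ :=
    expand_pow_cyclotomic p hp a _ ⟨q * r, by ring⟩
  have h2 : expand ℤ (q ^ b) (cyclotomic (p * q * r * p ^ a) ℤ)
      = cyclotomic (p * q * r * p ^ a * q ^ b) ℤ :=
    expand_pow_cyclotomic q hq b _ ⟨p * r * p ^ a, by ring⟩
  have h3 : expand ℤ (r ^ c) (cyclotomic (p * q * r * p ^ a * q ^ b) ℤ)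
      = cyclotomic (p * q * r * p ^ a * q ^ b * r ^ c) ℤ :=
    expand_pow_cyclotomic r hr c _ ⟨p * q * p ^ a * q ^ b, by ring⟩
  have key : expand ℤ (r ^ c) (expand ℤ (q ^ b) (expand ℤ (p ^ a) (cyclotomic (p * q * r) ℤ)))
      = cyclotomic (p * q * r * p ^ a * q ^ b * r ^ c) ℤ := by rw [h1, h2, h3]
  rw [expand_expand, expand_expand] at key
  have harg2 : p * q * r * p ^ a * q ^ b * r ^ c = p ^ (a+1) * q ^ (b+1) * r ^ (c+1) := by ring
  rw [show r ^ c * q ^ b * p ^ a = p ^ a * q ^ b * r ^ c from by ring, harg2] at key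
  exact key.symm

/-- Extraction of grid components from cyclotomic divisibility. -/
lemma grid_cyclotomic {N D n : ℕ} (hD : 0 < D) (hn : 1 < n) (hND : N = D * n)
    (hcyc : cyclotomic N ℤ = expand ℤ D (cyclotomic n ℤ))
    (S : Finset (ZMod N)) (h : cyclotomic N ℤ ∣ maskPoly N S) (x : ℕ) (hx : x < D) :
    cyclotomic n ℤ ∣ ∑ s ∈ S.filter (fun s => s.val % D = x), (X : ℤ[X]) ^ (s.val / D) := by
  classical
  set F : ℤ[X] := cyclotomic n ℤ with hF
  have hFm : F.Monic := cyclotomic.monic n ℤ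
  set U : ℕ → ℤ[X] := fun x' => ∑ s ∈ S.filter (fun s => s.val % D = x'), (X : ℤ[X]) ^ (s.val / D)
    with hU
  -- decomposition of the mask polynomial
  have hmask : maskPoly N S = ∑ x' ∈ range D, expand ℤ D (U x') * X ^ x' := by
    have step1 : ∀ x' ∈ range D, expand ℤ D (U x') * X ^ x'
        = ∑ s ∈ S.filter (fun s => s.val % D = x'), (X : ℤ[X]) ^ s.val := by
      intro x' _
      rw [hU]
      simp only [map_sum, map_pow, expand_X, Finset.sum_mul]
      refine Finset.sum_congr rfl fun s hs => ?_
      have hsx : s.val % D = x' := (Finset.mem_filter.1 hs).2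
      rw [← pow_mul, ← pow_add]
      congr 1
      have hdm := Nat.div_add_mod s.val D
      omega
    rw [Finset.sum_congr rfl step1,
      Finset.sum_fiberwise_of_maps_to (g := fun s : ZMod N => s.val % D)
      (fun s _ => Finset.mem_range.2 (Nat.mod_lt _ hD)) (fun s => (X:ℤ[X]) ^ s.val)]
    rfl
  -- division with remainder
  set Rr : ℕ → ℤ[X] := fun x' => (U x') %ₘ F with hRr
  have hUdec : ∀ x', U x' = Rr x' + F * (U x' /ₘ F) := fun x' =>
    (modByMonic_add_div (U x') F).symm
  set G : ℤ[X] := ∑ x' ∈ Finset.range D, expand ℤ D (Rr x') * X ^ x' with hG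
  have hdvdG : expand ℤ D F ∣ G := by
    have hsplit : maskPoly N S
        = G + expand ℤ D F * ∑ x' ∈ Finset.range D, expand ℤ D (U x' /ₘ F) * X ^ x' := by
      rw [hmask, Finset.mul_sum, ← Finset.sum_add_distrib]
      refine Finset.sum_congr rfl fun x' _ => ?_
      conv_lhs => rw [hUdec x']
      rw [map_add, map_mul, add_mul]
      ring
    have h1 : expand ℤ D F ∣ maskPoly N S := by rw [← hcyc]; exact h
    have h2 : expand ℤ D F ∣ expand ℤ D F * ∑ x' ∈ Finset.range D, expand ℤ D (U x' /ₘ F) * X ^ x' :=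
      Dvd.intro _ rfl
    have := dvd_sub h1 h2
    rwa [hsplit, add_sub_cancel_right] at this
  have hdegF : F.natDegree = Nat.totient n := natDegree_cyclotomic n ℤ
  have htot : 0 < Nat.totient n := Nat.totient_pos.2 (by omega)
  have hG0 : G = 0 := by
    by_contra hne
    have hle := Polynomial.natDegree_le_of_dvd hdvdG hne
    rw [natDegree_expand, hdegF] at hle
    have hbound : G.natDegree ≤ (Nat.totient n - 1) * D + (D - 1) := by
      refine Polynomial.natDegree_sum_le_of_forall_le _ _ fun x' hx' => ?_
      have hx'D : x' < D := Finset.mem_range.1 hx'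
      refine le_trans (natDegree_mul_le) ?_
      rw [natDegree_X_pow, natDegree_expand]
      refine Nat.add_le_add ?_ (by omega)
      by_cases hR0 : Rr x' = 0
      · rw [hR0]
        simp only [natDegree_zero, zero_mul]
        exact Nat.zero_le _
      · have hdlt : (Rr x').natDegree < F.natDegree :=
          natDegree_lt_natDegree hR0 (degree_modByMonic_lt (U x') hFm)
        exact Nat.mul_le_mul_right D (by omega)
    have h4 : (Nat.totient n - 1) * D = Nat.totient n * D - D := by
      rw [Nat.sub_mul, one_mul]
    have h5 : D ≤ Nat.totient n * D := Nat.le_mul_of_pos_left D htot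
    omega
  -- extract: Rr x = 0
  have hRx : Rr x = 0 := by
    ext e
    have hcoeff : G.coeff (D * e + x) = 0 := by rw [hG0, coeff_zero]
    rw [hG, Polynomial.finset_sum_coeff] at hcoeff
    rw [Finset.sum_eq_single x] at hcoeff
    · rw [coeff_mul_X_pow', if_pos (Nat.le_add_left x (D*e)), Nat.add_sub_cancel,
        coeff_expand hD, if_pos (Dvd.intro e rfl), Nat.mul_div_cancel_left e hD] at hcoeff
      simpa using hcoeff
    · intro x' hx' hx'x
      have hx'D : x' < D := Finset.mem_range.1 hx'
      rw [coeff_mul_X_pow']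
      by_cases hle' : x' ≤ D * e + x
      · have hnd : ¬ D ∣ (D * e + x - x') := by
          rintro ⟨t, ht⟩
          have hsum : D * e + x = D * t + x' := by omega
          have e1 : (D * e + x) % D = x := by rw [Nat.mul_add_mod]; exact Nat.mod_eq_of_lt hx
          have e2 : (D * t + x') % D = x' := by rw [Nat.mul_add_mod]; exact Nat.mod_eq_of_lt hx'D
          rw [hsum, e2] at e1
          exact hx'x e1
        rw [if_pos hle', coeff_expand hD, if_neg hnd]
      · rw [if_neg hle']
    · intro hxx
      exact absurd (Finset.mem_range.2 hx) hxx
  refine ⟨U x /ₘ F, ?_⟩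
  have := hUdec x
  rw [hRx, zero_add] at this
  exact this


/-- For `d ∣ N`, divisibility by `d` in `ZMod N` is congruence of values mod `d`. -/
lemma zmod_dvd_sub_iff {N : ℕ} [NeZero N] {d : ℕ} (hd : d ∣ N) (a b : ZMod N) :
    (d : ZMod N) ∣ (a - b) ↔ a.val % d = b.val % d := by
  constructor
  · rintro ⟨t, ht⟩
    have ha : ((a.val : ℕ) : ZMod N) = a := by simp [ZMod.natCast_val, ZMod.cast_id]
    have hb : ((b.val : ℕ) : ZMod N) = b := by simp [ZMod.natCast_val, ZMod.cast_id]
    have hc : ((t.val : ℕ) : ZMod N) = t := by simp [ZMod.natCast_val, ZMod.cast_id]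
    have hcast : (((a.val : ℤ) - b.val - d * t.val : ℤ) : ZMod N) = 0 := by
      push_cast
      rw [ha, hb, hc]
      linear_combination ht
    have hNdvd : (N : ℤ) ∣ ((a.val : ℤ) - b.val - d * t.val) :=
      (ZMod.intCast_zmod_eq_zero_iff_dvd _ _).1 hcast
    have hddvd : (d : ℤ) ∣ ((a.val : ℤ) - b.val) := by
      have h1 : (d : ℤ) ∣ (N : ℤ) := Int.natCast_dvd_natCast.2 hd
      have h2 := h1.trans hNdvd
      have h3 : (d : ℤ) ∣ (d : ℤ) * t.val := Dvd.intro _ rfl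
      have := dvd_add h2 h3
      rwa [sub_add_cancel] at this
    have : b.val ≡ a.val [MOD d] := (Nat.modEq_iff_dvd).2 hddvd
    exact this.symm
  · intro hmod
    have : b.val ≡ a.val [MOD d] := hmod.symm
    obtain ⟨t, ht⟩ := (Nat.modEq_iff_dvd).1 this
    refine ⟨(t : ZMod N), ?_⟩
    have ha : ((a.val : ℕ) : ZMod N) = a := by simp [ZMod.natCast_val, ZMod.cast_id]
    have hb : ((b.val : ℕ) : ZMod N) = b := by simp [ZMod.natCast_val, ZMod.cast_id]
    have : a - b = (((a.val : ℤ) - b.val : ℤ) : ZMod N) := by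
      push_cast
      rw [ha, hb]
    rw [this, ht]
    push_cast
    ring


lemma grid_fibered
    (p q r : ℕ) (hp : p.Prime) (hq : q.Prime) (hr : r.Prime)
    (hpq : p ≠ q) (hpr : p ≠ r) (hqr : q ≠ r) (hp2 : p ≠ 2)
    (a b c N : ℕ) (hN : N = p ^ (a+1) * q ^ (b+1) * r ^ (c+1))
    (S : Finset (ZMod N)) (hPhiN : cycDvd N N S) (x0 : ZMod N)
    (hdiv : N / p ∉ DivSet N N ((S : Set (ZMod N)) ∩ gridSet N x0 (p ^ a * q ^ b * r ^ c))) :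
    Fibered N q ((S : Set (ZMod N)) ∩ gridSet N x0 (p ^ a * q ^ b * r ^ c)) ∨
      Fibered N r ((S : Set (ZMod N)) ∩ gridSet N x0 (p ^ a * q ^ b * r ^ c)) := by
  classical
  have hp1 := hp.one_lt
  have hq1 := hq.one_lt
  have hr1 := hr.one_lt
  set D := p ^ a * q ^ b * r ^ c with hD
  set n := p * q * r with hn
  have hD0 : 0 < D := by positivity
  have hn1 : 1 < n := by
    have h2 : 0 < q * r := by positivity
    calc 1 < p := hp1
      _ ≤ p * (q * r) := Nat.le_mul_of_pos_right p h2
      _ = n := by rw [hn]; ring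
  have hND : N = D * n := by rw [hN, hD, hn]; ring
  have hN0 : N ≠ 0 := by rw [hND]; positivity
  haveI : NeZero N := ⟨hN0⟩
  haveI : NeZero p := ⟨hp.pos.ne'⟩
  haveI : NeZero q := ⟨hq.pos.ne'⟩
  haveI : NeZero r := ⟨hr.pos.ne'⟩
  have hDdvdN : D ∣ N := ⟨n, hND⟩
  -- grid membership as congruence of values
  set x : ℕ := x0.val % D with hxdef
  have hxD : x < D := Nat.mod_lt _ hD0
  have hgrid_iff : ∀ w : ZMod N, w ∈ gridSet N x0 D ↔ w.val % D = x := by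
    intro w
    rw [hxdef]
    exact zmod_dvd_sub_iff hDdvdN w x0
  set A : Finset (ZMod N) := S.filter (fun s => s.val % D = x) with hAdef
  have hAmem : ∀ w : ZMod N, w ∈ A ↔ w ∈ (S : Set (ZMod N)) ∩ gridSet N x0 D := by
    intro w
    rw [hAdef, Finset.mem_filter]
    constructor
    · rintro ⟨h1, h2⟩; exact ⟨h1, (hgrid_iff w).2 h2⟩
    · rintro ⟨h1, h2⟩; exact ⟨h1, (hgrid_iff w).1 h2⟩
  set u : ZMod N → ℕ := fun s => s.val / D with hudef
  have hult : ∀ s : ZMod N, u s < n := by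
    intro s
    show s.val / D < n
    have h3 : s.val < D * n := by have := ZMod.val_lt s; omega
    exact Nat.div_lt_of_lt_mul h3
  have hval : ∀ w : ZMod N, w.val % D = x → w.val = D * u w + x := by
    intro w hw
    rw [hudef]
    simp only []
    have := Nat.div_add_mod w.val D
    omega
  -- congruence transfer for multiples of D
  have hmodDd : ∀ d' : ℕ, 0 < d' → d' ∣ n → ∀ w w' : ZMod N,
      w.val % D = x → w'.val % D = x →
      ((((D * d' : ℕ) : ZMod N)) ∣ (w - w') ↔ u w % d' = u w' % d') := by
    intro d' hd'0 hd'n w w' hw hw'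
    have hDd'N : D * d' ∣ N := by
      obtain ⟨e, he⟩ := hd'n
      exact ⟨e, by rw [hND, he]; ring⟩
    rw [zmod_dvd_sub_iff hDd'N w w']
    have hform : ∀ w'' : ZMod N, w''.val % D = x → w''.val % (D * d') = D * (u w'' % d') + x := by
      intro w'' hw''
      conv_lhs => rw [hval w'' hw'', ← Nat.div_add_mod (u w'') d']
      have he1 : D * (d' * (u w'' / d') + u w'' % d') + x
          = D * d' * (u w'' / d') + (D * (u w'' % d') + x) := by ring
      rw [he1, Nat.mul_add_mod]
      apply Nat.mod_eq_of_lt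
      have h1 : u w'' % d' + 1 ≤ d' := Nat.mod_lt _ hd'0
      have h2 : D * (u w'' % d' + 1) ≤ D * d' := Nat.mul_le_mul_left D h1
      have h3 : D * (u w'' % d' + 1) = D * (u w'' % d') + D := by ring
      omega
    rw [hform w hw, hform w' hw']
    constructor
    · intro h
      have := Nat.eq_of_mul_eq_mul_left hD0 (by omega : D * (u w % d') = D * (u w' % d'))
      exact this
    · intro h; rw [h]
  -- the injectivity from the missing difference
  have hinj : ∀ s ∈ A, ∀ s' ∈ A, u s % q = u s' % q → u s % r = u s' % r → s = s' := by
    intro s hs s' hs' hQ hR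
    by_contra hne
    have hsx : s.val % D = x := (Finset.mem_filter.1 hs).2
    have hs'x : s'.val % D = x := (Finset.mem_filter.1 hs').2
    have hqr0 : 0 < q * r := by positivity
    have hco : Nat.Coprime q r := (Nat.coprime_primes hq hr).2 hqr
    have hQR : u s % (q * r) = u s' % (q * r) :=
      (Nat.modEq_and_modEq_iff_modEq_mul hco).1 ⟨hQ, hR⟩
    have hdvd : (((D * (q * r) : ℕ) : ZMod N)) ∣ (s - s') :=
      (hmodDd (q * r) hqr0 ⟨p, by rw [hn]; ring⟩ s s' hsx hs'x).2 hQR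
    -- pass to values
    have hvdvd : D * (q * r) ∣ (s - s').val := by
      have h0 : ((0 : ZMod N)).val % (D * (q * r)) = 0 := by simp
      have := (zmod_dvd_sub_iff (d := D * (q * r)) ⟨p, by rw [hND, hn]; ring⟩ (s - s') 0).1
        (by rwa [sub_zero])
      rw [h0] at this
      exact Nat.dvd_of_mod_eq_zero this
    have hvne : (s - s').val ≠ 0 := by
      intro h0
      exact hne (sub_eq_zero.1 ((ZMod.val_eq_zero _).1 h0))
    have hvlt : (s - s').val < N := ZMod.val_lt _
    set m : ℕ := D * (q * r) with hm
    have hm0 : 0 < m := by positivity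
    have hNmp : N = m * p := by rw [hND, hn, hm]; ring
    set g : ℕ := Nat.gcd (s - s').val N with hg
    have hmg : m ∣ g := Nat.dvd_gcd hvdvd ⟨p, hNmp⟩
    have hgN : g ∣ N := Nat.gcd_dvd_right _ _
    obtain ⟨e, hge⟩ := hmg
    have hedvd : e ∣ p := by
      have : m * e ∣ m * p := by rw [← hge, ← hNmp]; exact hgN
      exact (Nat.mul_dvd_mul_iff_left hm0).1 this
    rcases (Nat.Prime.eq_one_or_self_of_dvd hp e hedvd) with he1 | hep
    · have hgm : g = m := by rw [hge, he1, mul_one]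
      have hNp : N / p = m := by rw [hNmp]; exact Nat.mul_div_cancel _ hp.pos
      apply hdiv
      refine ⟨s, (hAmem s).1 hs, s', (hAmem s').1 hs', ?_⟩
      rw [← hg, hgm, hNp]
    · have hgN' : g = N := by rw [hge, hep, ← hNmp]
      have h8 : g ∣ (s - s').val := by rw [hg]; exact Nat.gcd_dvd_left _ _
      rw [hgN'] at h8
      exact hvne (Nat.eq_zero_of_dvd_of_lt h8 hvlt)
  -- vanishing sums at primitive roots
  have hUdvd : cyclotomic n ℤ ∣ ∑ s ∈ A, (X : ℤ[X]) ^ (u s) := by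
    have hcycN : cyclotomic N ℤ = expand ℤ D (cyclotomic n ℤ) := by
      rw [hN, hD, hn]
      exact cyclotomic_eq_expand_D p q r a b c hp hq hr
    exact grid_cyclotomic hD0 hn1 hND hcycN S hPhiN x hxD
  have hvan : ∀ ω : ℂ, IsPrimitiveRoot ω n → ∑ s ∈ A, ω ^ (u s) = 0 := by
    intro ω hω
    obtain ⟨g, hg⟩ := hUdvd
    have h2 : (Polynomial.aeval ω) (cyclotomic n ℤ) = 0 := by
      rw [Polynomial.aeval_def, Polynomial.eval₂_eq_eval_map, map_cyclotomic]
      exact hω.isRoot_cyclotomic (by omega)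
    have h1 : ∑ s ∈ A, ω ^ (u s) = (Polynomial.aeval ω) (cyclotomic n ℤ * g) := by
      rw [← hg]
      simp [map_sum]
    rw [map_mul, h2, zero_mul] at h1
    exact h1
  have htri : ∀ α β γ : ℂ, IsPrimitiveRoot α p → IsPrimitiveRoot β q → IsPrimitiveRoot γ r →
      ∑ s ∈ A, α ^ (u s) * β ^ (u s) * γ ^ (u s) = 0 := by
    intro α β γ hα hβ hγ
    have hoα : orderOf α = p := hα.eq_orderOf.symm
    have hoβ : orderOf β = q := hβ.eq_orderOf.symm
    have hoγ : orderOf γ = r := hγ.eq_orderOf.symm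
    have hco1 : Nat.Coprime (orderOf α) (orderOf β) := by
      rw [hoα, hoβ]; exact (Nat.coprime_primes hp hq).2 hpq
    have h1 : orderOf (α * β) = p * q := by
      rw [(Commute.all α β).orderOf_mul_eq_mul_orderOf_of_coprime hco1, hoα, hoβ]
    have hco2 : Nat.Coprime (orderOf (α * β)) (orderOf γ) := by
      rw [h1, hoγ]
      exact Nat.Coprime.mul ((Nat.coprime_primes hp hr).2 hpr) ((Nat.coprime_primes hq hr).2 hqr)
    have h2 : orderOf (α * β * γ) = p * q * r := by
      rw [(Commute.all (α * β) γ).orderOf_mul_eq_mul_orderOf_of_coprime hco2, h1, hoγ]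
    have hprim : IsPrimitiveRoot (α * β * γ) n := by
      rw [hn, ← h2]; exact IsPrimitiveRoot.orderOf _
    have hv := hvan (α * β * γ) hprim
    rw [← hv]
    exact Finset.sum_congr rfl fun s _ => by rw [mul_pow, mul_pow]
  -- class counting function (coordinates ordered r, q, p)
  set cc : ZMod r × ZMod q × ZMod p → ℕ := fun t =>
    (A.filter (fun s' => (((u s' : ℕ) : ZMod r), ((u s' : ℕ) : ZMod q), ((u s' : ℕ) : ZMod p))
      = t)).card with hccdef
  have hsum : ∀ α β γ : ℂ, IsPrimitiveRoot α p → IsPrimitiveRoot β q → IsPrimitiveRoot γ r →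
      ∑ z : ZMod r, (∑ y : ZMod q, (∑ i : ZMod p, (cc (z, y, i) : ℂ) * α ^ i.val) * β ^ y.val)
        * γ ^ z.val = 0 := by
    intro α β γ hα hβ hγ
    have h0 := htri α β γ hα hβ hγ
    rw [← Finset.sum_fiberwise_of_maps_to (g := fun s' : ZMod N =>
      (((u s' : ℕ) : ZMod r), ((u s' : ℕ) : ZMod q), ((u s' : ℕ) : ZMod p)))
      (fun s' _ => Finset.mem_univ _) (fun s' => α ^ (u s') * β ^ (u s') * γ ^ (u s'))] at h0
    have hinner : ∀ t : ZMod r × ZMod q × ZMod p,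
        (∑ s' ∈ A.filter (fun s' =>
            (((u s' : ℕ) : ZMod r), ((u s' : ℕ) : ZMod q), ((u s' : ℕ) : ZMod p)) = t),
          α ^ (u s') * β ^ (u s') * γ ^ (u s'))
        = (cc t : ℂ) * α ^ t.2.2.val * β ^ t.2.1.val * γ ^ t.1.val := by
      intro t
      have hterm : ∀ s' ∈ A.filter (fun s' =>
          (((u s' : ℕ) : ZMod r), ((u s' : ℕ) : ZMod q), ((u s' : ℕ) : ZMod p)) = t),
          α ^ (u s') * β ^ (u s') * γ ^ (u s')
          = α ^ t.2.2.val * β ^ t.2.1.val * γ ^ t.1.val := by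
        intro s' hs'
        obtain ⟨hsA, hst⟩ := Finset.mem_filter.1 hs'
        rw [← hst]
        simp only [ZMod.val_natCast]
        rw [pow_natmod hα.pow_eq_one, pow_natmod hβ.pow_eq_one, pow_natmod hγ.pow_eq_one]
      rw [Finset.sum_congr rfl hterm, Finset.sum_const, hccdef]
      rw [nsmul_eq_mul]
      ring
    calc ∑ z : ZMod r, (∑ y : ZMod q, (∑ i : ZMod p, (cc (z, y, i) : ℂ) * α ^ i.val) * β ^ y.val)
          * γ ^ z.val
        = ∑ z : ZMod r, ∑ y : ZMod q, ∑ i : ZMod p,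
            (cc (z, y, i) : ℂ) * α ^ i.val * β ^ y.val * γ ^ z.val := by
          simp only [Finset.sum_mul]
      _ = ∑ t : ZMod r × ZMod q × ZMod p,
            (cc t : ℂ) * α ^ t.2.2.val * β ^ t.2.1.val * γ ^ t.1.val := by
          simp only [Fintype.sum_prod_type]
      _ = ∑ t : ZMod r × ZMod q × ZMod p,
            ∑ s' ∈ A.filter (fun s' =>
              (((u s' : ℕ) : ZMod r), ((u s' : ℕ) : ZMod q), ((u s' : ℕ) : ZMod p)) = t),
            α ^ (u s') * β ^ (u s') * γ ^ (u s') := by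
          refine Finset.sum_congr rfl fun t _ => ?_
          rw [hinner t]
      _ = 0 := h0
  -- class cards ≤ 1 in each (z,y) column stack
  have hcast_iff : ∀ (m' : ℕ) (a' b' : ℕ), ((a' : ZMod m') = (b' : ZMod m')) ↔ a' % m' = b' % m' :=
    fun m' a' b' => ZMod.natCast_eq_natCast_iff' a' b' m'
  have hsum_col : ∀ (z : ZMod r) (y : ZMod q), ∑ i : ZMod p, cc (z, y, i)
      = (A.filter (fun s' => ((u s' : ℕ) : ZMod r) = z ∧ ((u s' : ℕ) : ZMod q) = y)).card := by
    intro z y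
    rw [Finset.card_eq_sum_card_fiberwise
      (f := fun s' : ZMod N => ((u s' : ℕ) : ZMod p)) (t := Finset.univ) (fun s' _ => Finset.mem_univ _)]
    refine Finset.sum_congr rfl fun i _ => ?_
    rw [hccdef]
    simp only [Finset.filter_filter]
    congr 1
    apply Finset.filter_congr
    intro s' _
    simp only [Prod.mk.injEq]
    constructor
    · rintro ⟨h1, h2, h3⟩; exact ⟨⟨h1, h2⟩, h3⟩
    · rintro ⟨⟨h1, h2⟩, h3⟩; exact ⟨h1, h2, h3⟩
  have hcol_le : ∀ (z : ZMod r) (y : ZMod q), ∑ i : ZMod p, cc (z, y, i) ≤ 1 := by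
    intro z y
    rw [hsum_col z y]
    apply Finset.card_le_one.2
    intro s1 hs1 s2 hs2
    have hm1 := Finset.mem_filter.1 hs1
    have hm2 := Finset.mem_filter.1 hs2
    apply hinj s1 hm1.1 s2 hm2.1
    · exact (hcast_iff q _ _).1 (by rw [hm1.2.2, hm2.2.2])
    · exact (hcast_iff r _ _).1 (by rw [hm1.2.1, hm2.2.1])
  -- the key rank-one relation
  have hp3 : 3 ≤ p := by have := hp.two_le; omega
  have hKR : ∀ (y y' : ZMod q) (z z' : ZMod r) (i : ZMod p),
      cc (z, y, i) + cc (z', y', i) = cc (z', y, i) + cc (z, y', i) := by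
    intro y y' z z' i
    -- Step 1: constancy in z
    have step1 : ∀ (α β : ℂ), IsPrimitiveRoot α p → IsPrimitiveRoot β q →
        ∀ z1 z2 : ZMod r,
        (∑ y0 : ZMod q, (∑ i0 : ZMod p, (cc (z1, y0, i0) : ℂ) * α ^ i0.val) * β ^ y0.val)
        = (∑ y0 : ZMod q, (∑ i0 : ZMod p, (cc (z2, y0, i0) : ℂ) * α ^ i0.val) * β ^ y0.val) := by
      intro α β hα hβ
      exact sum_primroots_const hr _ (fun γ hγ => hsum α β γ hα hβ hγ)
    -- Step 2: constancy in y of the z-differences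
    have step2 : ∀ (α : ℂ), IsPrimitiveRoot α p → ∀ (z1 z2 : ZMod r) (y1 y2 : ZMod q),
        (∑ i0 : ZMod p, ((cc (z1, y1, i0) : ℂ) - cc (z2, y1, i0)) * α ^ i0.val)
        = (∑ i0 : ZMod p, ((cc (z1, y2, i0) : ℂ) - cc (z2, y2, i0)) * α ^ i0.val) := by
      intro α hα z1 z2
      refine sum_primroots_const hq
        (fun y0 => ∑ i0 : ZMod p, ((cc (z1, y0, i0) : ℂ) - cc (z2, y0, i0)) * α ^ i0.val) ?_
      intro β hβ
      have h1 := step1 α β hα hβ z1 z2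
      calc ∑ y0 : ZMod q,
            (∑ i0 : ZMod p, ((cc (z1, y0, i0) : ℂ) - cc (z2, y0, i0)) * α ^ i0.val) * β ^ y0.val
          = ∑ y0 : ZMod q,
            ((∑ i0 : ZMod p, (cc (z1, y0, i0) : ℂ) * α ^ i0.val) * β ^ y0.val
              - (∑ i0 : ZMod p, (cc (z2, y0, i0) : ℂ) * α ^ i0.val) * β ^ y0.val) := by
            refine Finset.sum_congr rfl fun y0 _ => ?_
            rw [← sub_mul, ← Finset.sum_sub_distrib]
            congr 1
            refine Finset.sum_congr rfl fun i0 _ => ?_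
            ring
        _ = 0 := by rw [Finset.sum_sub_distrib, h1, sub_self]
    -- Step 3: the ℤ-valued difference function is constant
    set w : ZMod p → ℤ := fun i0 =>
      (cc (z, y, i0) : ℤ) - cc (z', y, i0) - cc (z, y', i0) + cc (z', y', i0) with hwdef
    have hw0 : ∀ α : ℂ, IsPrimitiveRoot α p → ∑ i0 : ZMod p, (w i0 : ℂ) * α ^ i0.val = 0 := by
      intro α hα
      have h2 := step2 α hα z z' y y'
      calc ∑ i0 : ZMod p, (w i0 : ℂ) * α ^ i0.val
          = ∑ i0 : ZMod p, (((cc (z, y, i0) : ℂ) - cc (z', y, i0)) * α ^ i0.val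
            - ((cc (z, y', i0) : ℂ) - cc (z', y', i0)) * α ^ i0.val) := by
            refine Finset.sum_congr rfl fun i0 _ => ?_
            rw [hwdef]
            push_cast
            ring
        _ = 0 := by rw [Finset.sum_sub_distrib, h2, sub_self]
    have hwconst := sum_primroots_const hp (fun i0 => (w i0 : ℂ)) hw0
    have hwconstZ : ∀ i1 i2 : ZMod p, w i1 = w i2 := by
      intro i1 i2
      have h9 : ((w i1 : ℤ) : ℂ) = ((w i2 : ℤ) : ℂ) := hwconst i1 i2
      exact_mod_cast h9
    -- sum of w over i
    have hsumw : ∑ i0 : ZMod p, w i0 = (p : ℤ) * w i := by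
      rw [Finset.sum_congr rfl fun i0 _ => hwconstZ i0 i]
      rw [Finset.sum_const, Finset.card_univ, ZMod.card]
      simp [nsmul_eq_mul]
    have hsumw2 : ∑ i0 : ZMod p, w i0
        = ((∑ i0 : ZMod p, cc (z, y, i0) : ℕ) : ℤ) - (∑ i0 : ZMod p, cc (z', y, i0) : ℕ)
          - (∑ i0 : ZMod p, cc (z, y', i0) : ℕ) + (∑ i0 : ZMod p, cc (z', y', i0) : ℕ) := by
      rw [hwdef]
      push_cast
      rw [Finset.sum_add_distrib, Finset.sum_sub_distrib, Finset.sum_sub_distrib]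
    have hb1 := hcol_le z y
    have hb2 := hcol_le z' y
    have hb3 := hcol_le z y'
    have hb4 := hcol_le z' y'
    have hwz : w i = 0 := by
      have h5 : (p : ℤ) * w i = ((∑ i0 : ZMod p, cc (z, y, i0) : ℕ) : ℤ)
          - (∑ i0 : ZMod p, cc (z', y, i0) : ℕ)
          - (∑ i0 : ZMod p, cc (z, y', i0) : ℕ) + (∑ i0 : ZMod p, cc (z', y', i0) : ℕ) := by
        rw [← hsumw, hsumw2]
      have hple : (3 : ℤ) ≤ (p : ℤ) := by exact_mod_cast hp3
      have h2le : (p : ℤ) * w i ≤ 2 := by omega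
      have h2ge : (-2 : ℤ) ≤ (p : ℤ) * w i := by omega
      rcases lt_trichotomy (w i) 0 with hneg | h0 | hpos
      · exfalso
        have hmul : (p : ℤ) * w i ≤ 3 * w i := mul_le_mul_of_nonpos_right hple hneg.le
        omega
      · exact h0
      · exfalso
        have hmul : 3 * w i ≤ (p : ℤ) * w i := mul_le_mul_of_nonneg_right hple hpos.le
        omega
    have := hwz
    rw [hwdef] at this
    simp only [] at this
    omega
  -- determination of grid elements by coordinates
  have hdet : ∀ s'' ∈ A, ∀ t : ZMod N, t.val % D = x →
      ((u s'' : ℕ) : ZMod r) = ((u t : ℕ) : ZMod r) →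
      ((u s'' : ℕ) : ZMod q) = ((u t : ℕ) : ZMod q) →
      ((u s'' : ℕ) : ZMod p) = ((u t : ℕ) : ZMod p) → s'' = t := by
    intro s'' hs'' t htx hRc hQc hPc
    have hs''x : s''.val % D = x := (Finset.mem_filter.1 hs'').2
    have hmp : u s'' % p = u t % p := (hcast_iff p _ _).1 hPc
    have hmq : u s'' % q = u t % q := (hcast_iff q _ _).1 hQc
    have hmr : u s'' % r = u t % r := (hcast_iff r _ _).1 hRc
    have hco_pq : Nat.Coprime p q := (Nat.coprime_primes hp hq).2 hpq
    have hco_pqr : Nat.Coprime (p * q) r :=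
      Nat.Coprime.mul ((Nat.coprime_primes hp hr).2 hpr) ((Nat.coprime_primes hq hr).2 hqr)
    have h1 : u s'' ≡ u t [MOD p * q] := (Nat.modEq_and_modEq_iff_modEq_mul hco_pq).1 ⟨hmp, hmq⟩
    have h2 : u s'' ≡ u t [MOD n] := by
      rw [hn]
      exact (Nat.modEq_and_modEq_iff_modEq_mul hco_pqr).1 ⟨h1, hmr⟩
    have h3 : u s'' = u t := by
      have h4 : u s'' % n = u t % n := h2
      rwa [Nat.mod_eq_of_lt (hult _), Nat.mod_eq_of_lt (hult _)] at h4
    apply ZMod.val_injective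
    rw [hval s'' hs''x, hval t htx, h3]
  -- the dichotomy
  rcases cols_or_rows (fun (y : ZMod q) (z : ZMod r) (i : ZMod p) => cc (z, y, i))
      (fun y y' z z' i => hKR y y' z z' i) (fun y z => hcol_le z y) with hcols | hrows
  · -- fibered in the q direction
    left
    intro s hsP t ht
    have hsA : s ∈ A := (hAmem s).2 hsP
    have hsx : s.val % D = x := (Finset.mem_filter.1 hsA).2
    have hNq : N / q = D * (p * r) := by
      rw [show N = D * (p * r) * q from by rw [hND, hn]; ring]
      exact Nat.mul_div_cancel _ hq.pos
    have ht' : ((N / q : ℕ) : ZMod N) ∣ t - s := ht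
    have hDgrid : (D : ZMod N) ∣ (t - s) :=
      dvd_trans (Nat.cast_dvd_cast ⟨p * r, hNq⟩) ht'
    have htgrid : t ∈ gridSet N x0 D := by
      show (D : ZMod N) ∣ t - x0
      have hsgrid : (D : ZMod N) ∣ s - x0 := hsP.2
      have hsplit : t - x0 = (t - s) + (s - x0) := by ring
      rw [hsplit]
      exact dvd_add hDgrid hsgrid
    have htx : t.val % D = x := (hgrid_iff t).1 htgrid
    have hwp : u t % p = u s % p :=
      (hmodDd p hp.pos ⟨q * r, by rw [hn]; ring⟩ t s htx hsx).1
        (dvd_trans (Nat.cast_dvd_cast (show D * p ∣ N / q from ⟨r, by rw [hNq]; ring⟩)) ht')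
    have hwr : u t % r = u s % r :=
      (hmodDd r hr.pos ⟨p * q, by rw [hn]; ring⟩ t s htx hsx).1
        (dvd_trans (Nat.cast_dvd_cast (show D * r ∣ N / q from ⟨p, by rw [hNq]; ring⟩)) ht')
    have hcs : 0 < cc (((u s : ℕ) : ZMod r), ((u s : ℕ) : ZMod q), ((u s : ℕ) : ZMod p)) := by
      rw [hccdef]
      exact Finset.card_pos.2 ⟨s, Finset.mem_filter.2 ⟨hsA, rfl⟩⟩
    have hct : 0 < cc (((u t : ℕ) : ZMod r), ((u t : ℕ) : ZMod q), ((u t : ℕ) : ZMod p)) := by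
      have he1 : ((u t : ℕ) : ZMod r) = ((u s : ℕ) : ZMod r) := (hcast_iff r _ _).2 hwr
      have he2 : ((u t : ℕ) : ZMod p) = ((u s : ℕ) : ZMod p) := (hcast_iff p _ _).2 hwp
      rw [he1, he2]
      have hcol := congrFun (hcols ((u t : ℕ) : ZMod q) ((u s : ℕ) : ZMod q)
        ((u s : ℕ) : ZMod r)) (((u s : ℕ) : ZMod p))
      omega
    rw [hccdef] at hct
    obtain ⟨s'', hs''mem⟩ := Finset.card_pos.1 hct
    obtain ⟨hs''A, hs''tri⟩ := Finset.mem_filter.1 hs''mem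
    simp only [Prod.mk.injEq] at hs''tri
    have hfin : s'' = t := hdet s'' hs''A t htx hs''tri.1 hs''tri.2.1 hs''tri.2.2
    rw [← hfin]
    exact (hAmem s'').1 hs''A
  · -- fibered in the r direction
    right
    intro s hsP t ht
    have hsA : s ∈ A := (hAmem s).2 hsP
    have hsx : s.val % D = x := (Finset.mem_filter.1 hsA).2
    have hNr : N / r = D * (p * q) := by
      rw [show N = D * (p * q) * r from by rw [hND, hn]; ring]
      exact Nat.mul_div_cancel _ hr.pos
    have ht' : ((N / r : ℕ) : ZMod N) ∣ t - s := ht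
    have hDgrid : (D : ZMod N) ∣ (t - s) :=
      dvd_trans (Nat.cast_dvd_cast ⟨p * q, hNr⟩) ht'
    have htgrid : t ∈ gridSet N x0 D := by
      show (D : ZMod N) ∣ t - x0
      have hsgrid : (D : ZMod N) ∣ s - x0 := hsP.2
      have hsplit : t - x0 = (t - s) + (s - x0) := by ring
      rw [hsplit]
      exact dvd_add hDgrid hsgrid
    have htx : t.val % D = x := (hgrid_iff t).1 htgrid
    have hwp : u t % p = u s % p :=
      (hmodDd p hp.pos ⟨q * r, by rw [hn]; ring⟩ t s htx hsx).1
        (dvd_trans (Nat.cast_dvd_cast (show D * p ∣ N / r from ⟨q, by rw [hNr]; ring⟩)) ht')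
    have hwq : u t % q = u s % q :=
      (hmodDd q hq.pos ⟨p * r, by rw [hn]; ring⟩ t s htx hsx).1
        (dvd_trans (Nat.cast_dvd_cast (show D * q ∣ N / r from ⟨p, by rw [hNr]; ring⟩)) ht')
    have hcs : 0 < cc (((u s : ℕ) : ZMod r), ((u s : ℕ) : ZMod q), ((u s : ℕ) : ZMod p)) := by
      rw [hccdef]
      exact Finset.card_pos.2 ⟨s, Finset.mem_filter.2 ⟨hsA, rfl⟩⟩
    have hct : 0 < cc (((u t : ℕ) : ZMod r), ((u t : ℕ) : ZMod q), ((u t : ℕ) : ZMod p)) := by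
      have he1 : ((u t : ℕ) : ZMod q) = ((u s : ℕ) : ZMod q) := (hcast_iff q _ _).2 hwq
      have he2 : ((u t : ℕ) : ZMod p) = ((u s : ℕ) : ZMod p) := (hcast_iff p _ _).2 hwp
      rw [he1, he2]
      have hrow := congrFun (hrows ((u s : ℕ) : ZMod q) ((u t : ℕ) : ZMod r)
        ((u s : ℕ) : ZMod r)) (((u s : ℕ) : ZMod p))
      omega
    rw [hccdef] at hct
    obtain ⟨s'', hs''mem⟩ := Finset.card_pos.1 hct
    obtain ⟨hs''A, hs''tri⟩ := Finset.mem_filter.1 hs''mem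
    simp only [Prod.mk.injEq] at hs''tri
    have hfin : s'' = t := hdet s'' hs''A t htx hs''tri.1 hs''tri.2.1 hs''tri.2.2
    rw [← hfin]
    exact (hAmem s'').1 hs''A


/-- **Missing top difference implies fibering.** Let
`N = p_i^{m_i} p_j^{m_j} p_k^{m_k}` and `S ⊆ ℤ_N` with `Φ_N | S`.
(i) If `p_i ≠ 2` and `N/p_i ∉ Div_N(S ∩ Λ)` for some `D(N)`-grid `Λ`, then `S ∩ Λ` is
`N`-fibered in the `p_j` or the `p_k` direction.
(ii) If `p_i, p_j ≠ 2` and `N/p_i, N/p_j ∉ Div_N(S)`, then `S` is `N`-fibered in the `p_k`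
direction. -/
theorem statement10
    (pi pj pk : ℕ) (hpi : pi.Prime) (hpj : pj.Prime) (hpk : pk.Prime)
    (hij : pi ≠ pj) (hik : pi ≠ pk) (hjk : pj ≠ pk)
    (mi mj mk : ℕ) (hmi : 1 ≤ mi) (hmj : 1 ≤ mj) (hmk : 1 ≤ mk)
    (N : ℕ) (hN : N = pi ^ mi * pj ^ mj * pk ^ mk)
    (S : Finset (ZMod N)) (hPhiN : cycDvd N N S) :
    ((pi ≠ 2 → ∀ x0 : ZMod N,
      N / pi ∉ DivSet N N
        ((S : Set (ZMod N)) ∩ gridSet N x0 (pi ^ (mi - 1) * pj ^ (mj - 1) * pk ^ (mk - 1))) →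
      (Fibered N pj
          ((S : Set (ZMod N)) ∩ gridSet N x0 (pi ^ (mi - 1) * pj ^ (mj - 1) * pk ^ (mk - 1))) ∨
       Fibered N pk
          ((S : Set (ZMod N)) ∩ gridSet N x0 (pi ^ (mi - 1) * pj ^ (mj - 1) * pk ^ (mk - 1)))))
    ∧ (pi ≠ 2 → pj ≠ 2 →
        N / pi ∉ DivSet N N (S : Set (ZMod N)) →
        N / pj ∉ DivSet N N (S : Set (ZMod N)) →
        Fibered N pk (S : Set (ZMod N)))) := by
  classical
  obtain ⟨a, rfl⟩ := Nat.exists_eq_succ_of_ne_zero (by omega : mi ≠ 0)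
  obtain ⟨b, rfl⟩ := Nat.exists_eq_succ_of_ne_zero (by omega : mj ≠ 0)
  obtain ⟨c, rfl⟩ := Nat.exists_eq_succ_of_ne_zero (by omega : mk ≠ 0)
  simp only [Nat.succ_sub_one, Nat.add_sub_cancel]
  have hN0 : N ≠ 0 := by
    rw [hN]
    exact (Nat.mul_pos (Nat.mul_pos (pow_pos hpi.pos _) (pow_pos hpj.pos _))
      (pow_pos hpk.pos _)).ne'
  haveI : NeZero N := ⟨hN0⟩
  constructor
  · intro hp2 x0 hdiv
    exact grid_fibered pi pj pk hpi hpj hpk hij hik hjk hp2 a b c N hN S hPhiN x0 hdiv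
  · intro hp2 hq2 hdi hdj
    intro s hsP t ht
    set D := pi ^ a * pj ^ b * pk ^ c with hD
    set P : Set (ZMod N) := (S : Set (ZMod N)) ∩ gridSet N s D with hP
    have hdiv_i : N / pi ∉ DivSet N N P := by
      rintro ⟨s1, hs1, s2, hs2, hg⟩
      exact hdi ⟨s1, hs1.1, s2, hs2.1, hg⟩
    have Hi := grid_fibered pi pj pk hpi hpj hpk hij hik hjk hp2 a b c N hN S hPhiN s hdiv_i
    have hsPmem : s ∈ P := by
      refine ⟨hsP, ?_⟩
      show (D : ZMod N) ∣ s - s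
      simp
    have hnotj : ¬ Fibered N pj P := by
      intro hf
      have h2 : (s + ((N / pj : ℕ) : ZMod N)) ∈ gridSet N s (N / pj) := by
        show ((N / pj : ℕ) : ZMod N) ∣ (s + ((N / pj : ℕ) : ZMod N)) - s
        have hv : (s + ((N / pj : ℕ) : ZMod N)) - s = ((N / pj : ℕ) : ZMod N) := by ring
        rw [hv]
      have hmem2 : (s + ((N / pj : ℕ) : ZMod N)) ∈ P := hf s hsPmem h2
      apply hdj
      refine ⟨s + ((N / pj : ℕ) : ZMod N), hmem2.1, s, hsP, ?_⟩
      have hv : (s + ((N / pj : ℕ) : ZMod N)) - s = ((N / pj : ℕ) : ZMod N) := by ring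
      rw [hv]
      have hlt : N / pj < N := Nat.div_lt_self (Nat.pos_of_ne_zero hN0) hpj.one_lt
      rw [ZMod.val_natCast_of_lt hlt]
      refine Nat.gcd_eq_left (Nat.div_dvd_of_dvd ⟨pi ^ (a+1) * pj ^ b * pk ^ (c+1), ?_⟩)
      rw [hN, pow_succ pi, pow_succ pj, pow_succ pk]
      ring
    rcases Hi with hfj | hfk
    · exact absurd hfj hnotj
    · exact (hfk s hsPmem ht).1
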